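/- arXiv:0807.3519 — 2 statements merged into one kernel-verified Lean document; each statement's English description precedes it below -/
import Mathlib

section
/- A word w does not lie in the support of the free Lie algebra L_K(A) (i.e., w appears with coefficient 0 in every Lie polynomial over K) if and only if l*(w) = 0. -/
open MonoidAlgebra

attribute [local instance 100] LieRing.ofAssociativeRing

/-- The word `w` viewed as a monomial in the free associative algebra `K⟨A⟩`. -/
noncomputable def word (K : Type*) [CommRing K] {A : Type*} (w : List A) :
    MonoidAlgebra K (FreeMonoid A) :=
  MonoidAlgebra.single (FreeMonoid.ofList w) 1

/-- The adjoint `l*` of the left-normed Lie bracketing, defined by the recursion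
`l*(ε) = 0`, `l*(a) = a`, `l*(aub) = l*(au)·b − l*(ub)·a`. -/
noncomputable def lstar (K : Type*) [CommRing K] {A : Type*} :
    List A → MonoidAlgebra K (FreeMonoid A)
  | [] => 0
  | [a] => word K [a]
  | a :: b :: r =>
      lstar K (a :: (b :: r).dropLast) * word K [(b :: r).getLast (by simp)]
        - lstar K (b :: r) * word K [a]
  termination_by w => w.length
  decreasing_by
    · simp [List.length_dropLast]
    · simp

/-- The free Lie algebra `L_K(A)`: the Lie subalgebra of `K⟨A⟩` generated by the letters. -/
noncomputable def freeLie (K : Type*) [CommRing K] (A : Type*) :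
    LieSubalgebra K (MonoidAlgebra K (FreeMonoid A)) :=
  LieSubalgebra.lieSpan K _ {P | ∃ a : A, P = word K [a]}

section Aux

variable {K : Type*} [CommRing K] {A : Type*}

/-- The left-normed Lie bracketing `l`. -/
noncomputable def lnb (K : Type*) [CommRing K] {A : Type*} :
    List A → MonoidAlgebra K (FreeMonoid A)
  | [] => 0
  | a :: r => r.foldl (fun P c => ⁅P, word K [c]⁆) (word K [a])

lemma lnb_nil : lnb K ([] : List A) = 0 := rfl

lemma lnb_singleton (a : A) : lnb K [a] = word K [a] := rfl

lemma lnb_concat (u : List A) (hu : u ≠ []) (c : A) :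
    lnb K (u ++ [c]) = ⁅lnb K u, word K [c]⁆ := by
  cases u with
  | nil => exact absurd rfl hu
  | cons a r =>
    show lnb K (a :: (r ++ [c])) = _
    simp only [lnb, List.foldl_append, List.foldl_cons, List.foldl_nil]

lemma ofList_inj {x y : List A} : (FreeMonoid.ofList x = FreeMonoid.ofList y) ↔ x = y :=
  ⟨fun h => congrArg FreeMonoid.toList h, fun h => congrArg _ h⟩

lemma coeff_mul_word_concat (P : MonoidAlgebra K (FreeMonoid A)) (c : A) (v : List A) :
    (P * word K [c]).coeff (FreeMonoid.ofList (v ++ [c])) = P.coeff (FreeMonoid.ofList v) := by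
  have H : ∀ a : FreeMonoid A,
      a * FreeMonoid.ofList [c] = FreeMonoid.ofList (v ++ [c]) ↔ a = FreeMonoid.ofList v := by
    intro a
    rw [FreeMonoid.ofList_append]
    exact (mul_left_injective (FreeMonoid.ofList [c])).eq_iff
  rw [word]
  exact (MonoidAlgebra.mul_single_apply_aux (x := P) _ (fun m' _ => H m')).trans (mul_one _)

lemma coeff_mul_word_of_ne (P : MonoidAlgebra K (FreeMonoid A)) (c : A) (w : List A)
    (hw : ∀ v : List A, w ≠ v ++ [c]) :
    (P * word K [c]).coeff (FreeMonoid.ofList w) = 0 := by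
  apply MonoidAlgebra.mul_single_apply_of_not_exists_mul
  rintro ⟨d, hd⟩
  exact hw (FreeMonoid.toList d) hd

lemma coeff_word_mul_cons (P : MonoidAlgebra K (FreeMonoid A)) (c : A) (v : List A) :
    (word K [c] * P).coeff (FreeMonoid.ofList (c :: v)) = P.coeff (FreeMonoid.ofList v) := by
  have H : ∀ a : FreeMonoid A,
      FreeMonoid.ofList [c] * a = FreeMonoid.ofList (c :: v) ↔ a = FreeMonoid.ofList v := by
    intro a
    have : FreeMonoid.ofList (c :: v) = FreeMonoid.ofList [c] * FreeMonoid.ofList v := rfl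
    rw [this]
    exact (mul_right_injective (FreeMonoid.ofList [c])).eq_iff
  rw [word]
  exact (MonoidAlgebra.single_mul_apply_aux (x := P) _ (fun m' _ => H m')).trans (one_mul _)

lemma coeff_word_mul_of_ne (P : MonoidAlgebra K (FreeMonoid A)) (c : A) (w : List A)
    (hw : ∀ v : List A, w ≠ c :: v) :
    (word K [c] * P).coeff (FreeMonoid.ofList w) = 0 := by
  apply MonoidAlgebra.single_mul_apply_of_not_exists_mul
  rintro ⟨d, hd⟩
  exact hw (FreeMonoid.toList d) hd

lemma lnb_apply_eq_zero (u w : List A) (h : w.length ≠ u.length) :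
    (lnb K u).coeff (FreeMonoid.ofList w) = 0 := by
  classical
  induction u using List.reverseRecOn generalizing w with
  | nil => simp [lnb_nil]
  | append_singleton u' c ih =>
    rcases eq_or_ne u' [] with rfl | hu'
    · rw [List.nil_append, lnb_singleton, word, coeff_single, Finsupp.single_apply, if_neg]
      intro hw
      apply h
      rw [ofList_inj] at hw
      simp [← hw]
    · rw [lnb_concat u' hu' c, Ring.lie_def, MonoidAlgebra.coeff_sub, Finsupp.sub_apply]
      have h1 : (lnb K u' * word K [c]).coeff (FreeMonoid.ofList w) = 0 := by
        by_cases hx : ∃ v, w = v ++ [c]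
        · obtain ⟨v, rfl⟩ := hx
          rw [coeff_mul_word_concat]
          apply ih
          intro hvl
          apply h
          simp [hvl]
        · exact coeff_mul_word_of_ne _ _ _ (by push_neg at hx; exact hx)
      have h2 : (word K [c] * lnb K u').coeff (FreeMonoid.ofList w) = 0 := by
        by_cases hx : ∃ v, w = c :: v
        · obtain ⟨v, rfl⟩ := hx
          rw [coeff_word_mul_cons]
          apply ih
          intro hvl
          apply h
          simp [hvl]
        · exact coeff_word_mul_of_ne _ _ _ (by push_neg at hx; exact hx)
      rw [h1, h2, sub_zero]

lemma key_step (a : A) (s : List A) (hs : s ≠ [])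
    (P Q : MonoidAlgebra K (FreeMonoid A))
    (hP : ∀ u : List A, P.coeff (FreeMonoid.ofList u) = (lnb K u).coeff (FreeMonoid.ofList (a :: s.dropLast)))
    (hQ : ∀ u : List A, Q.coeff (FreeMonoid.ofList u) = (lnb K u).coeff (FreeMonoid.ofList s))
    (u : List A) :
    (P * word K [s.getLast hs] - Q * word K [a]).coeff (FreeMonoid.ofList u)
      = (lnb K u).coeff (FreeMonoid.ofList (a :: s)) := by
  classical
  have hs' : a :: s = (a :: s.dropLast) ++ [s.getLast hs] := by
    rw [List.cons_append, List.dropLast_append_getLast hs]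
  rw [MonoidAlgebra.coeff_sub, Finsupp.sub_apply]
  induction u using List.reverseRecOn with
  | nil =>
    rw [coeff_mul_word_of_ne _ _ _ (by simp), coeff_mul_word_of_ne _ _ _ (by simp), lnb_nil]
    simp
  | append_singleton u' c _ =>
    have e1 : (P * word K [s.getLast hs]).coeff (FreeMonoid.ofList (u' ++ [c]))
        = if c = s.getLast hs then (lnb K u').coeff (FreeMonoid.ofList (a :: s.dropLast)) else 0 := by
      by_cases hc : c = s.getLast hs
      · rw [if_pos hc, hc, coeff_mul_word_concat, hP]
      · rw [if_neg hc]
        apply coeff_mul_word_of_ne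
        intro v hv
        exact hc (by simpa using congrArg List.getLast? hv)
    have e2 : (Q * word K [a]).coeff (FreeMonoid.ofList (u' ++ [c]))
        = if c = a then (lnb K u').coeff (FreeMonoid.ofList s) else 0 := by
      by_cases hc : c = a
      · rw [if_pos hc, hc, coeff_mul_word_concat, hQ]
      · rw [if_neg hc]
        apply coeff_mul_word_of_ne
        intro v hv
        exact hc (by simpa using congrArg List.getLast? hv)
    rw [e1, e2]
    rcases eq_or_ne u' [] with rfl | hu'
    · rw [lnb_nil]
      rw [lnb_apply_eq_zero _ _ (by simp [hs])]
      simp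
    · rw [lnb_concat u' hu' c, Ring.lie_def, MonoidAlgebra.coeff_sub, Finsupp.sub_apply]
      congr 1
      · by_cases hc : c = s.getLast hs
        · rw [if_pos hc, hc]
          conv_rhs => rw [hs']
          rw [coeff_mul_word_concat]
        · rw [if_neg hc]
          symm
          apply coeff_mul_word_of_ne
          intro v hv
          apply hc
          have h1 : (a :: s).getLast? = some c := by rw [hv, List.getLast?_concat]
          have h2 : (a :: s).getLast? = some (s.getLast hs) := by
            rw [hs', List.getLast?_concat]
          rw [h2] at h1
          exact (Option.some.inj h1).symm
      · by_cases hc : c = a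
        · rw [if_pos hc, hc]
          exact (coeff_word_mul_cons _ a s).symm
        · rw [if_neg hc]
          symm
          apply coeff_word_mul_of_ne
          intro v hv
          exact hc (by injection hv with h1 h2; exact h1.symm)

lemma lstar_apply (w : List A) :
    ∀ u : List A, (lstar K w).coeff (FreeMonoid.ofList u) = (lnb K u).coeff (FreeMonoid.ofList w) := by
  classical
  generalize hn : w.length = n
  induction n using Nat.strong_induction_on generalizing w with
  | _ n ih =>
    match w, hn with
    | [], hn =>
      intro u
      simp only [lstar]
      cases u with
      | nil => simp [lnb_nil]
      | cons c t =>
        rw [lnb_apply_eq_zero _ _ (by simp)]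
        simp
    | [a], hn =>
      intro u
      simp only [lstar]
      match u with
      | [] =>
        rw [lnb_nil, word, coeff_single, Finsupp.single_apply, if_neg (by rw [ofList_inj]; simp)]
        simp
      | [c] =>
        rw [lnb_singleton, word, word, coeff_single, coeff_single, Finsupp.single_apply, Finsupp.single_apply]
        by_cases h : a = c
        · subst h; rfl
        · rw [if_neg (by rw [ofList_inj]; simp [h]), if_neg (by rw [ofList_inj]; simp [Ne.symm h])]
      | c :: d :: t =>
        rw [lnb_apply_eq_zero _ _ (by simp)]
        rw [word, coeff_single, Finsupp.single_apply, if_neg (by rw [ofList_inj]; simp)]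
    | a :: b :: r, hn =>
      intro u
      simp only [lstar]
      refine key_step a (b :: r) (by simp) _ _ (fun u => ?_) (fun u => ?_) u
      · exact ih (a :: (b :: r).dropLast).length (by simp [← hn]) _ rfl u
      · exact ih (b :: r).length (by simp [← hn]) _ rfl u

/-- The submodule spanned by the left-normed brackets. -/
noncomputable def MSpan (K : Type*) [CommRing K] (A : Type*) :
    Submodule K (MonoidAlgebra K (FreeMonoid A)) :=
  Submodule.span K {P | ∃ u : List A, u ≠ [] ∧ P = lnb K u}

lemma lnb_mem_freeLie (u : List A) (hu : u ≠ []) : lnb K u ∈ freeLie K A := by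
  induction u using List.reverseRecOn with
  | nil => exact absurd rfl hu
  | append_singleton u' c ih =>
    rcases eq_or_ne u' [] with rfl | hu'
    · rw [List.nil_append, lnb_singleton]
      exact LieSubalgebra.subset_lieSpan ⟨c, rfl⟩
    · rw [lnb_concat u' hu' c]
      exact (freeLie K A).lie_mem (ih hu') (LieSubalgebra.subset_lieSpan ⟨c, rfl⟩)

lemma lie_word_mem {x : MonoidAlgebra K (FreeMonoid A)} (hx : x ∈ MSpan K A) (c : A) :
    ⁅x, word K [c]⁆ ∈ MSpan K A := by
  induction hx using Submodule.span_induction with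
  | mem P hP =>
    obtain ⟨u, hu, rfl⟩ := hP
    exact Submodule.subset_span ⟨u ++ [c], by simp, (lnb_concat u hu c).symm⟩
  | zero => rw [zero_lie]; exact zero_mem _
  | add a b _ _ iha ihb => rw [add_lie]; exact add_mem iha ihb
  | smul r a _ iha => rw [smul_lie]; exact Submodule.smul_mem _ r iha

lemma lie_lnb_mem (v : List A) :
    ∀ x ∈ MSpan K A, ⁅x, lnb K v⁆ ∈ MSpan K A := by
  induction v using List.reverseRecOn with
  | nil => intro x _; rw [lnb_nil, lie_zero]; exact zero_mem _
  | append_singleton v' c ih =>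
    rcases eq_or_ne v' [] with rfl | hv'
    · intro x hx
      rw [List.nil_append, lnb_singleton]
      exact lie_word_mem hx c
    · intro x hx
      rw [lnb_concat v' hv' c, leibniz_lie]
      refine add_mem (lie_word_mem (ih x hx) c) ?_
      rw [← lie_skew]
      exact neg_mem (ih _ (lie_word_mem hx c))

lemma MSpan_lie_mem {x y : MonoidAlgebra K (FreeMonoid A)}
    (hx : x ∈ MSpan K A) (hy : y ∈ MSpan K A) : ⁅x, y⁆ ∈ MSpan K A := by
  induction hy using Submodule.span_induction with
  | mem P hP =>
    obtain ⟨u, _, rfl⟩ := hP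
    exact lie_lnb_mem u x hx
  | zero => rw [lie_zero]; exact zero_mem _
  | add a b _ _ iha ihb => rw [lie_add]; exact add_mem iha ihb
  | smul r a _ iha => rw [lie_smul]; exact Submodule.smul_mem _ r iha

lemma freeLie_le_MSpan : ∀ Q ∈ freeLie K A, Q ∈ MSpan K A := by
  intro Q hQ
  have hle : freeLie K A ≤
      ({ MSpan K A with lie_mem' := fun hx hy => MSpan_lie_mem hx hy } :
        LieSubalgebra K (MonoidAlgebra K (FreeMonoid A))) := by
    rw [freeLie, LieSubalgebra.lieSpan_le]
    rintro P ⟨a, rfl⟩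
    exact Submodule.subset_span ⟨[a], by simp, (lnb_singleton a).symm⟩
  exact hle hQ

end Aux

/-- a word `w` does not lie in the support of `L_K(A)`
(its coefficient in every Lie polynomial is zero) iff `l*(w) = 0`. -/
theorem not_mem_support_iff_lstar_eq_zero {K : Type*} [CommRing K] {A : Type*} [Fintype A]
    (w : List A) :
    (∀ Q ∈ freeLie K A, Q.coeff (FreeMonoid.ofList w) = 0) ↔ lstar K w = 0 := by
  constructor
  · intro h
    ext u
    have hu := lstar_apply (K := K) w (FreeMonoid.toList u)
    rw [FreeMonoid.ofList_toList] at hu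
    rw [hu]
    rcases eq_or_ne (FreeMonoid.toList u) [] with he | hne
    · rw [he, lnb_nil]; simp
    · simpa using h _ (lnb_mem_freeLie _ hne)
  · intro h Q hQ
    have hQ' : Q ∈ MSpan K A := freeLie_le_MSpan Q hQ
    clear hQ
    induction hQ' using Submodule.span_induction with
    | mem P hP =>
      obtain ⟨u, _, rfl⟩ := hP
      rw [← lstar_apply, h]
      simp
    | zero => simp
    | add a b _ _ iha ihb => rw [MonoidAlgebra.coeff_add, Finsupp.add_apply, iha, ihb, add_zero]
    | smul r a _ iha => rw [MonoidAlgebra.coeff_smul, Finsupp.smul_apply, iha, smul_zero]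
end

section
/- For any word w and any integer r with 1 ≤ r ≤ |w|, l*(w) = Σ over all factorizations w = s u t with |u| = r of l*(u) · (−1)^{|s|} · (s̃ ⧢ t), where s̃ is the reversal of s and ⧢ denotes the shuffle product. -/
open MonoidAlgebra

/-- The shuffle product of two words, as an element of `K⟨A⟩`. -/
noncomputable def shuffle (K : Type*) [CommRing K] {A : Type*} :
    List A → List A → MonoidAlgebra K (FreeMonoid A)
  | [], v => word K v
  | u, [] => word K u
  | a :: u, b :: v =>
      word K [a] * shuffle K u (b :: v) + word K [b] * shuffle K (a :: u) v
  termination_by u v => u.length + v.length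

section Aux

variable (K : Type*) [CommRing K] {A : Type*}

lemma word_nil : word K ([] : List A) = 1 := by
  simp [word, MonoidAlgebra.one_def]

lemma word_append (u v : List A) : word K u * word K v = word K (u ++ v) := by
  simp [word, MonoidAlgebra.single_mul_single]

lemma shuffle_nil_left (v : List A) : shuffle K [] v = word K v := by
  cases v <;> simp [shuffle]

lemma shuffle_nil_right (u : List A) : shuffle K u [] = word K u := by
  cases u <;> simp [shuffle]

lemma shuffle_cons_cons (a b : A) (u v : List A) :
    shuffle K (a :: u) (b :: v)
      = word K [a] * shuffle K u (b :: v) + word K [b] * shuffle K (a :: u) v := by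
  rw [shuffle]

lemma lstar_rec (a b : A) (m : List A) :
    lstar K (a :: (m ++ [b]))
      = lstar K (a :: m) * word K [b] - lstar K (m ++ [b]) * word K [a] := by
  cases m with
  | nil =>
      conv_lhs => rw [show a :: ([] ++ [b]) = [a, b] from rfl, lstar]
      simp [lstar]
  | cons c m' =>
      rw [show a :: ((c :: m') ++ [b]) = a :: c :: (m' ++ [b]) by simp, lstar]
      have hd : (c :: (m' ++ [b])).dropLast = c :: m' :=
        (List.dropLast_concat : ((c :: m') ++ [b]).dropLast = _)
      have hg : (c :: (m' ++ [b])).getLast (by simp) = b := by simp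
      rw [hd, hg]
      rfl

/-- The `i`-th summand for parameter `r`. -/
noncomputable def TT (w : List A) (r i : ℕ) : MonoidAlgebra K (FreeMonoid A) :=
  lstar K ((w.drop i).take r) *
    ((-1 : K) ^ i • shuffle K (w.take i).reverse (w.drop (i + r)))

noncomputable def AA (w : List A) (r i : ℕ) : MonoidAlgebra K (FreeMonoid A) :=
  lstar K ((w.drop i).take r) *
    ((-1 : K) ^ i • (word K ((w.drop (i + r)).take 1) *
      shuffle K (w.take i).reverse (w.drop (i + r + 1))))

noncomputable def BB (w : List A) (r i : ℕ) : MonoidAlgebra K (FreeMonoid A) :=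
  lstar K ((w.drop (i + 1)).take r) *
    ((-1 : K) ^ i • (word K ((w.drop i).take 1) *
      shuffle K (w.take i).reverse (w.drop (i + r + 1))))

lemma L1 (w : List A) (r i : ℕ) (hr : 1 ≤ r) (h : i + r + 1 ≤ w.length) :
    TT K w (r + 1) i = AA K w r i - BB K w r i := by
  have hi : i < w.length := by omega
  have hir : i + r < w.length := by omega
  have h1 : w.drop i = (getElem w (i) (by omega)) :: w.drop (i + 1) := List.drop_eq_getElem_cons hi
  have h2 : w.drop (i + r) = (getElem w (i + r) (by omega)) :: w.drop (i + r + 1) :=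
    List.drop_eq_getElem_cons hir
  have ht1 : (w.drop (i + r)).take 1 = [(getElem w (i + r) (by omega))] := by rw [h2]; rfl
  have ht1' : (w.drop i).take 1 = [(getElem w (i) (by omega))] := by rw [h1]; rfl
  -- middle segment
  have hmid : (w.drop (i + 1)).take (r - 1) ++ [(getElem w (i + r) (by omega))] = (w.drop (i + 1)).take r := by
    have h5 := (List.take_add (l := w.drop (i + 1)) (i := r - 1) (j := 1)).symm
    rw [List.drop_drop, show i + 1 + (r - 1) = i + r by omega, ht1,
      show r - 1 + 1 = r by omega] at h5
    exact h5
  have hu' : (w.drop i).take (r + 1)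
      = (getElem w (i) (by omega)) :: ((w.drop (i + 1)).take (r - 1) ++ [(getElem w (i + r) (by omega))]) := by
    rw [h1, List.take_succ_cons, ← hmid]
  have hu : (w.drop i).take r = (getElem w (i) (by omega)) :: (w.drop (i + 1)).take (r - 1) := by
    conv_lhs => rw [h1, show r = r - 1 + 1 from by omega, List.take_succ_cons]
  rw [TT, AA, BB, hu', lstar_rec, hmid, ← hu, ht1, ht1',
    show i + (r + 1) = i + r + 1 by omega]
  simp only [smul_sub, sub_mul, mul_assoc, mul_smul_comm]

lemma L2 (w : List A) (r : ℕ) : AA K w r 0 = TT K w r 0 := by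
  rw [AA, TT]
  simp only [List.take_zero, List.reverse_nil, shuffle_nil_left, Nat.zero_add,
    word_append]
  congr 2
  have hdd : List.drop 1 (List.drop r w) = List.drop (r + 1) w := by
    rw [List.drop_drop, Nat.add_comm]
  rw [← hdd, List.take_append_drop]

lemma L3 (w : List A) (r i : ℕ) (h : i + r + 1 < w.length) :
    BB K w r i = AA K w r (i + 1) - TT K w r (i + 1) := by
  have hi : i < w.length := by omega
  have h1 : w.drop i = (getElem w (i) (by omega)) :: w.drop (i + 1) := List.drop_eq_getElem_cons hi
  have ht1 : (w.drop i).take 1 = [(getElem w (i) (by omega))] := by rw [h1]; rfl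
  have h2 : w.drop (i + r + 1) = (getElem w (i + r + 1) (by omega)) :: w.drop (i + r + 2) :=
    List.drop_eq_getElem_cons h
  have ht2 : (w.drop (i + r + 1)).take 1 = [(getElem w (i + r + 1) (by omega))] := by rw [h2]; rfl
  have hs : (w.take (i + 1)).reverse = (getElem w (i) (by omega)) :: (w.take i).reverse := by
    rw [List.take_succ, List.getElem?_eq_getElem hi]
    simp
  rw [TT, AA, BB, hs,
    show i + 1 + r = i + r + 1 by omega, show i + r + 1 + 1 = i + r + 2 by omega,
    ht1, ht2, h2, shuffle_cons_cons, ← h2]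
  rw [pow_succ, mul_comm ((-1 : K) ^ i) (-1), neg_one_mul, neg_smul, smul_add]
  simp only [neg_smul, mul_add, mul_neg]
  have habs : ∀ P Q : MonoidAlgebra K (FreeMonoid A), -Q - (-P + -Q) = P := by
    intro P Q; abel
  exact (habs _ _).symm

lemma L4 (w : List A) (r i : ℕ) (h : i + r + 1 = w.length) :
    BB K w r i = - TT K w r (i + 1) := by
  have hi : i < w.length := by omega
  have h1 : w.drop i = (getElem w (i) (by omega)) :: w.drop (i + 1) := List.drop_eq_getElem_cons hi
  have ht1 : (w.drop i).take 1 = [(getElem w (i) (by omega))] := by rw [h1]; rfl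
  have h2 : w.drop (i + r + 1) = [] := by
    rw [List.drop_eq_nil_iff]
    omega
  have hs : (w.take (i + 1)).reverse = (getElem w (i) (by omega)) :: (w.take i).reverse := by
    rw [List.take_succ, List.getElem?_eq_getElem hi]
    simp
  rw [TT, BB, hs, show i + 1 + r = i + r + 1 by omega, ht1, h2,
    shuffle_nil_right, shuffle_nil_right, word_append,
    show [(getElem w (i) (by omega))] ++ (w.take i).reverse = (getElem w (i) (by omega)) :: (w.take i).reverse from rfl]
  rw [pow_succ, mul_comm ((-1 : K) ^ i) (-1), neg_one_mul, neg_smul, mul_neg, neg_neg]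

lemma key (w : List A) : ∀ d r : ℕ, 1 ≤ r → r + d = w.length →
    lstar K w = ∑ i ∈ Finset.range (d + 1), TT K w r i := by
  intro d
  induction d with
  | zero =>
      intro r h1 h2
      rw [Finset.sum_range_one, TT]
      have hd0 : w.drop r = [] := by rw [List.drop_eq_nil_iff]; omega
      simp only [List.drop_zero, List.take_zero, List.reverse_nil, Nat.zero_add, hd0,
        shuffle_nil_right, word_nil, pow_zero, one_smul, mul_one]
      rw [show r = w.length from by omega, List.take_length]
  | succ d ih =>
      intro r h1 h2
      have step : ∑ i ∈ Finset.range (d + 1), TT K w (r + 1) i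
          = ∑ i ∈ Finset.range (d + 1 + 1), TT K w r i := by
        have e1 : ∀ i ∈ Finset.range (d + 1), TT K w (r + 1) i = AA K w r i - BB K w r i := by
          intro i hi
          exact L1 K w r i h1 (by simp at hi; omega)
        rw [Finset.sum_congr rfl e1, Finset.sum_sub_distrib]
        rw [Finset.sum_range_succ (f := fun i => BB K w r i),
          Finset.sum_range_succ' (f := fun i => AA K w r i)]
        have e2 : ∀ i ∈ Finset.range d, BB K w r i = AA K w r (i + 1) - TT K w r (i + 1) := by
          intro i hi
          exact L3 K w r i (by simp at hi; omega)
        rw [Finset.sum_congr rfl e2, L4 K w r d (by omega), L2,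
          Finset.sum_range_succ' (f := fun i => TT K w r i),
          Finset.sum_range_succ (f := fun i => TT K w r (i + 1)),
          Finset.sum_sub_distrib]
        abel
      rw [← step]
      exact ih (r + 1) (by omega) (by omega)

end Aux

/-- for `1 ≤ r ≤ |w|`,
`l*(w) = Σ_{w = sut, |u| = r} l*(u) (−1)^{|s|} (s̃ ⧢ t)`. -/
theorem lstar_eq_sum_factors {K : Type*} [CommRing K] {A : Type*} [Fintype A]
    (w : List A) (r : ℕ) (hr1 : 1 ≤ r) (hr2 : r ≤ w.length) :
    lstar K w = ∑ i ∈ Finset.range (w.length - r + 1),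
      lstar K ((w.drop i).take r) *
        ((-1 : K) ^ i • shuffle K (w.take i).reverse (w.drop (i + r))) := by
  have := key K w (w.length - r) r hr1 (by omega)
  rw [this]
  rfl
end
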